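/- The ring (ℂF_k)_r of radial elements of the group ring ℂ[F_k] (the ℂ-span of the sphere sums χ_n) is isomorphic as a ℂ-algebra to the polynomial ring ℂ[x], via the map sending ∑_{i=0}^n a_i χ_i to ∑_{i=0}^n a_i p_i(x). -/

import Mathlib

/-- The sphere of radius `n` about the identity in the free group `F_k`:
the finite set of elements of reduced word length `n`. -/
noncomputable def sphere (k n : ℕ) : Finset (FreeGroup (Fin k)) :=
  (Set.Finite.preimage (Function.Injective.injOn FreeGroup.toWord_injective)
    (List.finite_length_eq ((Fin k) × Bool) n)).toFinset

/-- `χ_n = ∑_{|x| = n} x`, the sum of the sphere of radius `n` in `ℂ[F_k]`. -/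
noncomputable def chi (k n : ℕ) : MonoidAlgebra ℂ (FreeGroup (Fin k)) :=
  ∑ x ∈ sphere k n, MonoidAlgebra.of ℂ (FreeGroup (Fin k)) x

/-- The polynomials `p_0 = 1`, `p_1 = z`, `p_2 = z² - 2k`,
`p_{n+1} = z p_n - (2k-1) p_{n-1}` for `n ≥ 2`. -/
noncomputable def p (k : ℕ) : ℕ → Polynomial ℂ
  | 0 => 1
  | 1 => Polynomial.X
  | 2 => Polynomial.X ^ 2 - Polynomial.C ((2 * k : ℕ) : ℂ)
  | (n + 3) => Polynomial.X * p k (n + 2) - Polynomial.C ((2 * k - 1 : ℕ) : ℂ) * p k (n + 1)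

/-- `e_0 = 1` and `e_n = 2k(2k-1)^{n-1}` for `n ≥ 1`, the cardinality of the sphere. -/
def eN (k n : ℕ) : ℕ := if n = 0 then 1 else 2 * k * (2 * k - 1) ^ (n - 1)

namespace Radial

open FreeGroup Polynomial MonoidAlgebra

variable {k : ℕ}

/-- tail of a reduced word is reduced -/
lemma red_tail {a : Fin k × Bool} {t : List (Fin k × Bool)}
    (h : reduce (a :: t) = a :: t) : reduce t = t := by
  have hlen : (reduce t).length ≤ t.length := FreeGroup.Red.length_le (reduce.red)
  have hc : reduce (a :: t) =
      List.casesOn (reduce t) [a] fun hd tl =>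
        if a.1 = hd.1 ∧ a.2 = !hd.2 then tl else a :: hd :: tl := reduce.cons a
  rcases h' : reduce t with _ | ⟨y, ys⟩ <;> rw [h', h] at hc
  · simp only [List.casesOn] at hc
    have : t = [] := by
      have := congrArg List.length hc
      simpa using this
    subst this
    rfl
  · simp only [List.casesOn] at hc
    split_ifs at hc with hcc
    · have h1 := congrArg List.length hc
      have h2 := congrArg List.length h'
      simp only [List.length_cons] at h1 h2
      omega
    · injection hc with _ h2
      rw [h2] at h' ⊢
      try exact h'

lemma reduce_cons_cons {ℓ a : Fin k × Bool} {t : List (Fin k × Bool)}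
    (h : reduce (a :: t) = a :: t) :
    reduce (ℓ :: a :: t) = if ℓ.1 = a.1 ∧ ℓ.2 = !a.2 then t else ℓ :: a :: t := by
  rw [reduce.cons, h]

lemma toWord_cons_mul (ℓ : Fin k × Bool) (w : FreeGroup (Fin k)) :
    (FreeGroup.mk [ℓ] * w).toWord = reduce (ℓ :: w.toWord) := by
  conv_lhs => rw [← FreeGroup.mk_toWord (x := w)]
  rw [FreeGroup.mul_mk, FreeGroup.toWord_mk]
  rfl

lemma mem_sphere {n : ℕ} {x : FreeGroup (Fin k)} :
    x ∈ sphere k n ↔ x.toWord.length = n := by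
  simp [sphere]

lemma sphere_zero : sphere k 0 = {1} := by
  ext x
  simp [mem_sphere, List.length_eq_zero_iff, FreeGroup.toWord_eq_nil_iff]

lemma chi_zero : chi k 0 = 1 := by
  rw [chi, sphere_zero, Finset.sum_singleton, MonoidAlgebra.of_apply,
    ← MonoidAlgebra.one_def]

lemma toWord_mk_singleton (ℓ : Fin k × Bool) :
    (FreeGroup.mk [ℓ]).toWord = [ℓ] := by
  rw [FreeGroup.toWord_mk, FreeGroup.reduce_singleton]

lemma mk_singleton_mem_sphere_one (ℓ : Fin k × Bool) :
    FreeGroup.mk [ℓ] ∈ sphere k 1 := by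
  rw [mem_sphere, toWord_mk_singleton]
  rfl

lemma sphere_one : sphere k 1 =
    Finset.image (fun ℓ : Fin k × Bool => FreeGroup.mk [ℓ]) Finset.univ := by
  ext x
  simp only [Finset.mem_image, Finset.mem_univ, true_and, mem_sphere]
  constructor
  · intro h
    obtain ⟨ℓ, hℓ⟩ := List.length_eq_one_iff.mp h
    exact ⟨ℓ, by rw [← FreeGroup.mk_toWord (x := x), hℓ]⟩
  · rintro ⟨ℓ, rfl⟩
    rw [toWord_mk_singleton]
    rfl

lemma mk_singleton_injective :
    Function.Injective (fun ℓ : Fin k × Bool => FreeGroup.mk [ℓ]) := by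
  intro a b h
  have := congrArg FreeGroup.toWord h
  rw [toWord_mk_singleton, toWord_mk_singleton] at this
  exact (List.cons.injEq _ _ _ _ ▸ this).1

lemma mul_inv_letter (ℓ : Fin k × Bool) :
    FreeGroup.mk [ℓ] * FreeGroup.mk [(ℓ.1, !ℓ.2)] = 1 := by
  rw [FreeGroup.mul_mk, ← FreeGroup.toWord_eq_nil_iff, FreeGroup.toWord_mk]
  have : reduce [(ℓ.1, !ℓ.2)] = [(ℓ.1, !ℓ.2)] := FreeGroup.reduce_singleton _
  rw [show (([ℓ] ++ [(ℓ.1, !ℓ.2)]) : List (Fin k × Bool)) = ℓ :: (ℓ.1, !ℓ.2) :: [] from rfl,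
    reduce_cons_cons this]
  simp

/-- The fundamental dichotomy: multiplying by one letter either extends
the reduced word or cancels its first letter. -/
lemma cancel_cases {n : ℕ} (hn : 1 ≤ n) (ℓ : Fin k × Bool) {w : FreeGroup (Fin k)}
    (hw : w.toWord.length = n) :
    (FreeGroup.mk [ℓ] * w).toWord = ℓ :: w.toWord ∨
      w.toWord = (ℓ.1, !ℓ.2) :: (FreeGroup.mk [ℓ] * w).toWord := by
  obtain ⟨a, t, ht⟩ : ∃ a t, w.toWord = a :: t := by
    rcases h : w.toWord with _ | ⟨a, t⟩
    · rw [h] at hw; simp at hw; omega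
    · exact ⟨a, t, rfl⟩
  have hred : reduce (a :: t) = a :: t := by
    rw [← ht]; exact FreeGroup.reduce_toWord w
  rw [toWord_cons_mul, ht, reduce_cons_cons hred]
  by_cases hc : ℓ.1 = a.1 ∧ ℓ.2 = !a.2
  · right
    rw [if_pos hc]
    congr 1
    have h1 : a.1 = ℓ.1 := hc.1.symm
    have h2 : a.2 = !ℓ.2 := by rw [hc.2, Bool.not_not]
    exact Prod.ext h1 h2
  · left
    rw [if_neg hc]

section ProductFormula

/-- pairs (letter, sphere element) -/
noncomputable def PP (k n : ℕ) : Finset ((Fin k × Bool) × FreeGroup (Fin k)) :=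
  Finset.univ ×ˢ sphere k n

lemma chi_one_mul (n : ℕ) :
    chi k 1 * chi k n = ∑ q ∈ (PP k n),
      MonoidAlgebra.single (FreeGroup.mk [q.1] * q.2) (1 : ℂ) := by
  rw [chi, chi, sphere_one, Finset.sum_image (fun a _ b _ h => mk_singleton_injective h),
    Finset.sum_mul_sum, ← Finset.sum_product']
  apply Finset.sum_congr rfl
  intro q _
  rw [MonoidAlgebra.of_apply, MonoidAlgebra.of_apply, MonoidAlgebra.single_mul_single, mul_one]

lemma key_plus (n : ℕ) (hn : 1 ≤ n) :
    ∀ q ∈ (PP k n).filter (fun q => ((FreeGroup.mk [q.1] * q.2).toWord).length = n + 1),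
      (FreeGroup.mk [q.1] * q.2).toWord = q.1 :: q.2.toWord := by
  intro q hq
  rw [Finset.mem_filter, PP, Finset.mem_product] at hq
  obtain ⟨⟨-, hw⟩, hlen⟩ := hq
  have hw' := mem_sphere.mp hw
  rcases cancel_cases hn q.1 hw' with h | h
  · exact h
  · exfalso
    have h1 := congrArg List.length h
    simp only [List.length_cons] at h1 hlen
    omega

lemma sum_plus (n : ℕ) (hn : 1 ≤ n) :
    ∑ q ∈ (PP k n).filter (fun q => ((FreeGroup.mk [q.1] * q.2).toWord).length = n + 1),
      MonoidAlgebra.single (FreeGroup.mk [q.1] * q.2) (1 : ℂ) = chi k (n + 1) := by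
  rw [chi]
  simp only [MonoidAlgebra.of_apply]
  refine Finset.sum_bij (fun q _ => FreeGroup.mk [q.1] * q.2) ?_ ?_ ?_ ?_
  · intro q hq
    rw [mem_sphere]
    exact (Finset.mem_filter.mp hq).2
  · intro q hq q' hq' heq
    have h1 := key_plus n hn q hq
    have h2 := key_plus n hn q' hq'
    have heq' : FreeGroup.mk [q.1] * q.2 = FreeGroup.mk [q'.1] * q'.2 := heq
    rw [heq', h2] at h1
    injection h1 with e1 e2
    exact (Prod.ext e1.symm (FreeGroup.toWord_injective e2.symm) : q = q')
  · intro u hu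
    rw [mem_sphere] at hu
    obtain ⟨a, t, ht⟩ : ∃ a t, u.toWord = a :: t := by
      rcases h : u.toWord with _ | ⟨a, t⟩
      · rw [h] at hu; simp at hu
      · exact ⟨a, t, rfl⟩
    have hred : reduce (a :: t) = a :: t := by rw [← ht]; exact FreeGroup.reduce_toWord u
    have htred : reduce t = t := red_tail hred
    have hw : (FreeGroup.mk t).toWord = t := by rw [FreeGroup.toWord_mk, htred]
    have hprod : FreeGroup.mk [a] * FreeGroup.mk t = u := by
      rw [FreeGroup.mul_mk]
      apply FreeGroup.toWord_injective
      rw [FreeGroup.toWord_mk, ht]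
      exact hred
    refine ⟨(a, FreeGroup.mk t), ?_, hprod⟩
    rw [Finset.mem_filter, PP, Finset.mem_product]
    refine ⟨⟨Finset.mem_univ _, ?_⟩, ?_⟩
    · rw [mem_sphere, hw]
      have := congrArg List.length ht
      simp only [List.length_cons] at this
      omega
    · show (FreeGroup.mk [a] * FreeGroup.mk t).toWord.length = n + 1
      rw [hprod, hu]
  · intro q hq
    rfl

lemma key_minus (n : ℕ) (hn : 1 ≤ n) :
    ∀ q ∈ (PP k n).filter (fun q => ¬ ((FreeGroup.mk [q.1] * q.2).toWord).length = n + 1),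
      q.2.toWord = (q.1.1, !q.1.2) :: (FreeGroup.mk [q.1] * q.2).toWord := by
  intro q hq
  rw [Finset.mem_filter, PP, Finset.mem_product] at hq
  obtain ⟨⟨-, hw⟩, hlen⟩ := hq
  have hw' := mem_sphere.mp hw
  rcases cancel_cases hn q.1 hw' with h | h
  · exfalso
    apply hlen
    rw [h, List.length_cons, hw']
  · exact h

lemma sum_minus_one :
    ∑ q ∈ (PP k 1).filter (fun q => ¬ ((FreeGroup.mk [q.1] * q.2).toWord).length = 1 + 1),
      MonoidAlgebra.single (FreeGroup.mk [q.1] * q.2) (1 : ℂ)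
      = (2 * k) • (1 : MonoidAlgebra ℂ (FreeGroup (Fin k))) := by
  have himg : (PP k 1).filter (fun q => ¬ ((FreeGroup.mk [q.1] * q.2).toWord).length = 1 + 1)
      = Finset.image (fun ℓ : Fin k × Bool => (ℓ, FreeGroup.mk [(ℓ.1, !ℓ.2)])) Finset.univ := by
    ext q
    simp only [Finset.mem_image, Finset.mem_univ, true_and]
    constructor
    · intro hq
      refine ⟨q.1, ?_⟩
      have hk := key_minus 1 le_rfl q hq
      rw [Finset.mem_filter, PP, Finset.mem_product] at hq
      obtain ⟨⟨-, hw⟩, hlen⟩ := hq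
      have hw1 := mem_sphere.mp hw
      have hnil : (FreeGroup.mk [q.1] * q.2).toWord = [] := by
        have hlc := congrArg List.length hk
        rw [hw1, List.length_cons] at hlc
        exact List.length_eq_zero_iff.mp (by omega)
      rw [hnil] at hk
      have hq2 : q.2 = FreeGroup.mk [(q.1.1, !q.1.2)] :=
        FreeGroup.toWord_injective (by rw [hk, toWord_mk_singleton])
      exact Prod.ext rfl hq2.symm
    · rintro ⟨ℓ, rfl⟩
      rw [Finset.mem_filter, PP, Finset.mem_product]
      refine ⟨⟨Finset.mem_univ _, mk_singleton_mem_sphere_one _⟩, ?_⟩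
      show ¬ (FreeGroup.mk [ℓ] * FreeGroup.mk [(ℓ.1, !ℓ.2)]).toWord.length = 1 + 1
      rw [mul_inv_letter, FreeGroup.toWord_one]
      simp
  rw [himg, Finset.sum_image (fun a _ b _ h => (Prod.ext_iff.mp h).1)]
  have hval : ∀ ℓ : Fin k × Bool,
      MonoidAlgebra.single (FreeGroup.mk [ℓ] * FreeGroup.mk [(ℓ.1, !ℓ.2)]) (1 : ℂ)
        = (1 : MonoidAlgebra ℂ (FreeGroup (Fin k))) := fun ℓ => by
    rw [mul_inv_letter, ← MonoidAlgebra.one_def]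
  rw [Finset.sum_congr rfl (fun ℓ _ => hval ℓ), Finset.sum_const, Finset.card_univ,
    Fintype.card_prod, Fintype.card_fin, Fintype.card_bool, mul_comm]

lemma bool_pair_eq {x b : Fin k × Bool} (h1 : x.1 = b.1) (h2 : (!x.2) = !b.2) : x = b := by
  refine Prod.ext h1 ?_
  cases hx : x.2 <;> cases hb : b.2 <;> simp_all

lemma toWord_mk_cancel_free {x b : Fin k × Bool} {r : List (Fin k × Bool)}
    (hbr : reduce (b :: r) = b :: r) (hne : x ≠ b) :
    (FreeGroup.mk ((x.1, !x.2) :: b :: r)).toWord = (x.1, !x.2) :: b :: r := by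
  rw [FreeGroup.toWord_mk, reduce_cons_cons hbr, if_neg]
  rintro ⟨h1, h2⟩
  exact hne (bool_pair_eq (x := x) (b := b) h1 h2)

lemma sum_minus (n : ℕ) (hn : 2 ≤ n) :
    ∑ q ∈ (PP k n).filter (fun q => ¬ ((FreeGroup.mk [q.1] * q.2).toWord).length = n + 1),
      MonoidAlgebra.single (FreeGroup.mk [q.1] * q.2) (1 : ℂ)
      = (2 * k - 1) • chi k (n - 1) := by
  set S := (PP k n).filter (fun q => ¬ ((FreeGroup.mk [q.1] * q.2).toWord).length = n + 1)
    with hS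
  have hmaps : ∀ q ∈ S, FreeGroup.mk [q.1] * q.2 ∈ sphere k (n - 1) := by
    intro q hq
    have hk := key_minus n (by omega) q hq
    rw [hS, Finset.mem_filter, PP, Finset.mem_product] at hq
    have hw := mem_sphere.mp hq.1.2
    rw [mem_sphere]
    have hlc := congrArg List.length hk
    rw [hw, List.length_cons] at hlc
    omega
  have hfw := Finset.sum_fiberwise_of_maps_to' hmaps
    (fun t => MonoidAlgebra.single t (1 : ℂ))
  rw [← hfw]
  have hfib : ∀ t ∈ sphere k (n - 1),
      (S.filter (fun q => FreeGroup.mk [q.1] * q.2 = t)).card = 2 * k - 1 := by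
    intro t ht
    have hlt := mem_sphere.mp ht
    obtain ⟨b, r, hbr⟩ : ∃ b r, t.toWord = b :: r := by
      rcases h : t.toWord with _ | ⟨b, r⟩
      · rw [h] at hlt; simp at hlt; omega
      · exact ⟨b, r, rfl⟩
    have hred : reduce (b :: r) = b :: r := by rw [← hbr]; exact FreeGroup.reduce_toWord t
    have himg : S.filter (fun q => FreeGroup.mk [q.1] * q.2 = t)
        = Finset.image (fun ℓ : Fin k × Bool => (ℓ, FreeGroup.mk ((ℓ.1, !ℓ.2) :: b :: r)))
          (Finset.univ.erase b) := by
      ext q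
      simp only [Finset.mem_image, Finset.mem_erase, Finset.mem_univ, and_true]
      constructor
      · intro hq
        rw [Finset.mem_filter] at hq
        obtain ⟨hqS, hgt⟩ := hq
        have hk := key_minus n (by omega) q hqS
        rw [hgt, hbr] at hk
        have hne : q.1 ≠ b := by
          intro he
          rw [he] at hk
          have hredq : reduce q.2.toWord = q.2.toWord := FreeGroup.reduce_toWord q.2
          rw [hk] at hredq
          rw [reduce_cons_cons hred, if_pos ⟨rfl, rfl⟩] at hredq
          have := congrArg List.length hredq
          simp only [List.length_cons] at this
          omega
        refine ⟨q.1, hne, ?_⟩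
        have hq2 : q.2 = FreeGroup.mk ((q.1.1, !q.1.2) :: b :: r) :=
          FreeGroup.toWord_injective (by rw [hk, toWord_mk_cancel_free hred hne])
        exact Prod.ext_iff.mpr ⟨rfl, hq2.symm⟩
      · rintro ⟨ℓ, hne, rfl⟩
        have hw : (FreeGroup.mk ((ℓ.1, !ℓ.2) :: b :: r)).toWord = (ℓ.1, !ℓ.2) :: b :: r :=
          toWord_mk_cancel_free hred hne
        have hwred : reduce ((ℓ.1, !ℓ.2) :: b :: r) = (ℓ.1, !ℓ.2) :: b :: r := by
          rw [← FreeGroup.toWord_mk]; exact hw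
        have hlenbr : r.length + 1 = n - 1 := by
          have := congrArg List.length hbr
          rw [hlt] at this
          simp only [List.length_cons] at this
          omega
        have hprod : FreeGroup.mk [ℓ] * FreeGroup.mk ((ℓ.1, !ℓ.2) :: b :: r) = t := by
          rw [FreeGroup.mul_mk]
          apply FreeGroup.toWord_injective
          rw [FreeGroup.toWord_mk, hbr]
          show reduce (ℓ :: (ℓ.1, !ℓ.2) :: b :: r) = b :: r
          rw [reduce_cons_cons hwred, if_pos ⟨rfl, (Bool.not_not ℓ.2).symm⟩]
        rw [Finset.mem_filter, hS, Finset.mem_filter, PP, Finset.mem_product]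
        refine ⟨⟨⟨Finset.mem_univ _, ?_⟩, ?_⟩, hprod⟩
        · rw [mem_sphere, hw, List.length_cons, List.length_cons]
          omega
        · show ¬ (FreeGroup.mk [ℓ] * FreeGroup.mk ((ℓ.1, !ℓ.2) :: b :: r)).toWord.length = n + 1
          rw [hprod, hlt]
          omega
    rw [himg, Finset.card_image_of_injective _ (fun a b h => (Prod.ext_iff.mp h).1),
      Finset.card_erase_of_mem (Finset.mem_univ b), Finset.card_univ, Fintype.card_prod,
      Fintype.card_fin, Fintype.card_bool]
    omega
  calc ∑ t ∈ sphere k (n - 1), ∑ q ∈ S.filter (fun q => FreeGroup.mk [q.1] * q.2 = t),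
        MonoidAlgebra.single t (1 : ℂ)
      = ∑ t ∈ sphere k (n - 1), (2 * k - 1) • MonoidAlgebra.single t (1 : ℂ) := by
        refine Finset.sum_congr rfl fun t ht => ?_
        rw [Finset.sum_const, hfib t ht]
    _ = (2 * k - 1) • chi k (n - 1) := by
        rw [← Finset.smul_sum, chi]
        simp only [MonoidAlgebra.of_apply]

lemma chi_mul_one : chi k 1 * chi k 1 = chi k 2 + (2 * k) • 1 := by
  rw [chi_one_mul, ← Finset.sum_filter_add_sum_filter_not _
    (fun q => ((FreeGroup.mk [q.1] * q.2).toWord).length = 1 + 1),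
    sum_plus 1 le_rfl, sum_minus_one]

lemma chi_mul (n : ℕ) (hn : 2 ≤ n) :
    chi k 1 * chi k n = chi k (n + 1) + (2 * k - 1) • chi k (n - 1) := by
  rw [chi_one_mul, ← Finset.sum_filter_add_sum_filter_not _
    (fun q => ((FreeGroup.mk [q.1] * q.2).toWord).length = n + 1),
    sum_plus n (by omega), sum_minus n hn]

end ProductFormula

lemma aeval_p : ∀ n : ℕ, Polynomial.aeval (chi k 1) (p k n) = chi k n
  | 0 => by rw [p, _root_.map_one, chi_zero]
  | 1 => by rw [p, Polynomial.aeval_X]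
  | 2 => by
    rw [p, map_sub, map_pow, Polynomial.aeval_X, Polynomial.aeval_C, sq, chi_mul_one,
      Algebra.algebraMap_eq_smul_one, Nat.cast_smul_eq_nsmul, add_sub_cancel_right]
  | (n + 3) => by
    rw [p, map_sub, _root_.map_mul, _root_.map_mul, Polynomial.aeval_X, Polynomial.aeval_C,
      aeval_p (n + 2), aeval_p (n + 1), chi_mul (n + 2) (by omega)]
    have h1 : (n + 2) - 1 = n + 1 := rfl
    rw [h1, ← Algebra.smul_def, Nat.cast_smul_eq_nsmul, add_sub_cancel_right]

lemma chi_apply (m : ℕ) (x : FreeGroup (Fin k)) :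
    (chi k m).coeff x = if x.toWord.length = m then (1 : ℂ) else 0 := by
  classical
  rw [chi, MonoidAlgebra.coeff_sum, Finset.sum_apply']
  simp only [MonoidAlgebra.of_apply, MonoidAlgebra.coeff_single, Finsupp.single_apply]
  rw [Finset.sum_ite_eq' (sphere k m) x (fun _ => (1 : ℂ))]
  simp [mem_sphere]

lemma linearIndependent_chi (hk : 1 ≤ k) :
    LinearIndependent ℂ (chi k) := by
  classical
  rw [linearIndependent_iff]
  intro l hl
  ext n
  set x0 : Fin k × Bool := (⟨0, by omega⟩, true)
  set w : FreeGroup (Fin k) := FreeGroup.mk (List.replicate n x0) with hw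
  have hwlen : w.toWord.length = n := by
    rw [hw, FreeGroup.toWord_mk, FreeGroup.reduce_replicate, List.length_replicate]
  rw [Finsupp.linearCombination_apply, Finsupp.sum] at hl
  have h := DFunLike.congr_fun (F := FreeGroup (Fin k) →₀ ℂ) (congrArg MonoidAlgebra.coeff hl) w
  rw [MonoidAlgebra.coeff_sum, Finset.sum_apply'] at h
  have hterm : ∀ i ∈ l.support, (l i • chi k i).coeff w = if n = i then l i else 0 := by
    intro i _
    rw [MonoidAlgebra.coeff_smul, Finsupp.smul_apply, chi_apply, hwlen, smul_eq_mul, mul_ite, mul_one, mul_zero]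
  rw [Finset.sum_congr rfl hterm, Finset.sum_ite_eq l.support n (fun i => l i)] at h
  show l n = 0
  by_cases hn : n ∈ l.support
  · rw [if_pos hn] at h
    exact h
  · exact Finsupp.notMem_support_iff.mp hn

lemma p_monic_natDegree : ∀ n : ℕ, (p k n).Monic ∧ (p k n).natDegree = n
  | 0 => by rw [p]; exact ⟨Polynomial.monic_one, Polynomial.natDegree_one⟩
  | 1 => by rw [p]; exact ⟨Polynomial.monic_X, Polynomial.natDegree_X⟩
  | 2 => by
    rw [p]
    exact ⟨Polynomial.monic_X_pow_sub_C _ two_ne_zero, Polynomial.natDegree_X_pow_sub_C⟩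
  | (n + 3) => by
    obtain ⟨hm2, hd2⟩ := p_monic_natDegree (n + 2)
    obtain ⟨hm1, hd1⟩ := p_monic_natDegree (n + 1)
    rw [p]
    have hmL : (Polynomial.X * p k (n + 2)).Monic := Polynomial.monic_X.mul hm2
    have hdL : (Polynomial.X * p k (n + 2)).natDegree = n + 3 := by
      rw [Polynomial.natDegree_mul Polynomial.X_ne_zero hm2.ne_zero,
        Polynomial.natDegree_X, hd2]
      omega
    have hlt : (Polynomial.C ((2 * k - 1 : ℕ) : ℂ) * p k (n + 1)).degree
        < (Polynomial.X * p k (n + 2)).degree := by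
      have h1 : (Polynomial.C ((2 * k - 1 : ℕ) : ℂ) * p k (n + 1)).degree
          ≤ ((n + 1 : ℕ) : WithBot ℕ) := by
        rw [← smul_eq_C_mul]
        exact (Polynomial.degree_smul_le _ _).trans
          (le_of_eq (by rw [Polynomial.degree_eq_natDegree hm1.ne_zero, hd1]))
      have h2 : (Polynomial.X * p k (n + 2)).degree = ((n + 3 : ℕ) : WithBot ℕ) := by
        rw [Polynomial.degree_eq_natDegree hmL.ne_zero, hdL]
      rw [h2]
      exact lt_of_le_of_lt h1 (by exact_mod_cast (by omega : n + 1 < n + 3))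
    refine ⟨hmL.sub_of_left hlt, ?_⟩
    rw [Polynomial.natDegree_eq_of_degree_eq (Polynomial.degree_sub_eq_left_of_degree_lt hlt),
      hdL]

lemma mem_span_p (q : Polynomial ℂ) : q ∈ Submodule.span ℂ (Set.range (p k)) := by
  suffices H : ∀ N, ∀ q : Polynomial ℂ, q.natDegree ≤ N →
      q ∈ Submodule.span ℂ (Set.range (p k)) from H q.natDegree q le_rfl
  intro N
  induction N with
  | zero =>
    intro q hq
    rw [Polynomial.eq_C_of_natDegree_le_zero hq]
    have : Polynomial.C (q.coeff 0) = q.coeff 0 • p k 0 := by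
      rw [p]; rw [smul_eq_C_mul, mul_one]
    rw [this]
    exact Submodule.smul_mem _ _ (Submodule.subset_span ⟨0, rfl⟩)
  | succ N ih =>
    intro q hq
    by_cases h0 : q.natDegree ≤ N
    · exact ih q h0
    have hdeg : q.natDegree = N + 1 := by omega
    have hq0 : q ≠ 0 := fun h => by simp [h] at hdeg
    obtain ⟨hmp, hdp⟩ := p_monic_natDegree (k := k) (N + 1)
    set q' := q - Polynomial.C q.leadingCoeff * p k (N + 1) with hq'
    have hdlt : q'.degree < q.degree := by
      apply Polynomial.degree_sub_lt _ hq0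
      · rw [Polynomial.leadingCoeff_mul, Polynomial.leadingCoeff_C, hmp.leadingCoeff, mul_one]
      · rw [Polynomial.degree_C_mul (by
            rw [Polynomial.leadingCoeff_ne_zero]; exact hq0),
          Polynomial.degree_eq_natDegree hmp.ne_zero,
          Polynomial.degree_eq_natDegree hq0, hdp, hdeg]
    have hq'le : q'.natDegree ≤ N := by
      by_cases h : q' = 0
      · rw [h]; simp
      · have := Polynomial.natDegree_lt_natDegree h hdlt
        omega
    have : q = q' + Polynomial.C q.leadingCoeff * p k (N + 1) := by ring
    rw [this]
    refine Submodule.add_mem _ (ih q' hq'le) ?_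
    rw [← smul_eq_C_mul]
    exact Submodule.smul_mem _ _ (Submodule.subset_span ⟨N + 1, rfl⟩)

end Radial

/-- The radial subring `(ℂF_k)_r` (the subalgebra generated by the sphere sums `χ_n`,
which coincides with their `ℂ`-span) is isomorphic as a `ℂ`-algebra to `ℂ[x]`
via the map sending `∑ aᵢ χᵢ` to `∑ aᵢ pᵢ(x)`. -/
theorem stmt15 (k : ℕ) (hk : 2 ≤ k) :
    ∃ T : (Algebra.adjoin ℂ (Set.range (chi k))) ≃ₐ[ℂ] Polynomial ℂ,
      ∀ n : ℕ, T ⟨chi k n, Algebra.subset_adjoin (Set.mem_range_self n)⟩ = p k n := by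
  classical
  have hk1 : 1 ≤ k := by omega
  set A := Algebra.adjoin ℂ (Set.range (chi k)) with hA
  have hmem : chi k 1 ∈ A := Algebra.subset_adjoin (Set.mem_range_self 1)
  set φ : Polynomial ℂ →ₐ[ℂ] A := Polynomial.aeval (⟨chi k 1, hmem⟩ : A) with hφ
  have hφval : ∀ q : Polynomial ℂ,
      ((φ q : A) : MonoidAlgebra ℂ (FreeGroup (Fin k))) = Polynomial.aeval (chi k 1) q :=
    fun q => Polynomial.aeval_subalgebra_coe q A _
  have hφp : ∀ n : ℕ, φ (p k n)
      = ⟨chi k n, Algebra.subset_adjoin (Set.mem_range_self n)⟩ := fun n =>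
    Subtype.ext (by rw [hφval, Radial.aeval_p])
  have hinj : Function.Injective φ := by
    rw [injective_iff_map_eq_zero]
    intro q hq
    have hq' : Polynomial.aeval (chi k 1) q = 0 := by
      rw [← hφval, hq, Subalgebra.coe_zero]
    obtain ⟨c, hc⟩ := Finsupp.mem_span_range_iff_exists_finsupp.mp (Radial.mem_span_p q)
    have hcomb : Finsupp.linearCombination ℂ (chi k) c = 0 := by
      rw [Finsupp.linearCombination_apply]
      calc c.sum (fun i a => a • chi k i)
          = Polynomial.aeval (chi k 1) (c.sum fun i a => a • p k i) := by
            rw [map_finsuppSum]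
            exact Finsupp.sum_congr fun i _ => by
              rw [map_smul, Radial.aeval_p]
        _ = 0 := by rw [hc, hq']
    have hc0 : c = 0 := linearIndependent_iff.mp (Radial.linearIndependent_chi hk1) c hcomb
    rw [← hc, hc0]
    simp
  have hsurj : Function.Surjective φ := by
    rintro ⟨a, ha⟩
    have hle : A ≤ (Polynomial.aeval (chi k 1) :
        Polynomial ℂ →ₐ[ℂ] MonoidAlgebra ℂ (FreeGroup (Fin k))).range := by
      rw [hA]
      apply Algebra.adjoin_le
      rintro - ⟨n, rfl⟩
      exact ⟨p k n, Radial.aeval_p n⟩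
    obtain ⟨q, hq⟩ := hle ha
    have hq' : Polynomial.aeval (chi k 1) q = a := hq
    exact ⟨q, Subtype.ext (by rw [hφval, hq'])⟩
  refine ⟨(AlgEquiv.ofBijective φ ⟨hinj, hsurj⟩).symm, fun n => ?_⟩
  rw [AlgEquiv.symm_apply_eq]
  exact (hφp n).symm
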